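/- For any fixed θ ∈ (0,1) with 2θ/(1-θ) < ε and ε > 0, the quantity ∫∫_ℂ ∫∫_ℂ |K_λ(z,ξ) - K_0(z,ξ)|² dz dξ tends to 0 as |λ| → 0, where K_λ(z,ξ) = (g^r(z-ξ,λ) - (1/(16π))ln|z-ξ|²) · v(ξ)(1+|ξ|)^{3+ε/2}(1+|z|)^{-(3+ε/2)} with K_0 = 0; i.e. the Hilbert–Schmidt norm of the kernel difference between H^r(λ) and H^r(0) tends to zero, given the pointwise bounds: |g^r(z-ξ,λ) - (1/(16π))ln|z-ξ|²| ≤ C(|λ||z-ξ||ln|z-ξ|²| + |λ||z-ξ||ln|λ|²| + |λ|(1+|z-ξ|)) when |z-ξ| ≤ 1; ≤ C(|λ|^θ ln|z-ξ|² + |λ|^θ|ln|λ|²| + |λ|^θ) when |z-ξ| > 1 and |λ|^{1-θ}|z-ξ| ≤ 1; and ≤ C(|z-ξ|^{θ/(1-θ)} + ln|z-ξ|² + (2/(1-θ))|ln|z-ξ||) when |z-ξ| > 1 and |λ|^{1-θ}|z-ξ| > 1; and where |v(ξ)| ≤ q(1+|ξ|)^{-4-ε}. -/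

import Mathlib

open MeasureTheory

/-- The logarithmic kernel (1/(16π)) ln|w|², as a complex number. -/
noncomputable def logKer (w : ℂ) : ℂ :=
  ((1 / (16 * Real.pi) * Real.log (‖w‖ ^ 2) : ℝ) : ℂ)


lemma aux_mul_abs_log_le {t : ℝ} (h0 : 0 < t) (h1 : t ≤ 1) : t * |Real.log t| ≤ 1 := by
  rw [abs_of_nonpos (Real.log_nonpos h0.le h1)]
  have h := Real.log_le_sub_one_of_pos (inv_pos.mpr h0)
  rw [Real.log_inv] at h
  have h2 : t * (-Real.log t) ≤ t * (t⁻¹ - 1) := mul_le_mul_of_nonneg_left h h0.le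
  have h3 : t * (t⁻¹ - 1) = 1 - t := by field_simp
  linarith

lemma aux_log_le_rpow {t s : ℝ} (ht : 1 ≤ t) (hs : 0 < s) : Real.log t ≤ t ^ s / s :=
  Real.log_le_rpow_div (by linarith) hs

lemma aux_integrable_pow {p : ℝ} (hp : 2 < p) :
    Integrable (fun z : ℂ => (1 + ‖z‖) ^ (-p)) := by
  have h : (Module.finrank ℝ ℂ : ℝ) < p := by
    rw [Complex.finrank_real_complex]; exact_mod_cast hp
  simpa using integrable_one_add_norm (E := ℂ) (μ := volume) h

lemma aux_rpow_theta_abslog_le {a θ : ℝ} (ha0 : 0 < a) (ha1 : a ≤ 1) (hθ : 0 < θ) :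
    a ^ θ * |Real.log a| ≤ 1 / θ := by
  have h1 : (0:ℝ) < a ^ θ := Real.rpow_pos_of_pos ha0 θ
  have h2 : a ^ θ ≤ 1 := Real.rpow_le_one ha0.le ha1 hθ.le
  have h3 := aux_mul_abs_log_le h1 h2
  rw [Real.log_rpow ha0, abs_mul, abs_of_pos hθ] at h3
  rw [le_div_iff₀ hθ]
  nlinarith [h1.le]

lemma aux_region_bound {C θ a W D : ℝ} (hC : 0 < C) (hθ0 : 0 < θ) (hθ1 : θ < 1)
    (ha0 : 0 < a) (ha1 : a ≤ 1) (hW : 0 < W) (hD : 0 ≤ D)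
    (h1 : W ≤ 1 → D ≤ C * (a * W * |Real.log (W ^ 2)| + a * W * |Real.log (a ^ 2)| +
      a * (1 + W)))
    (h2 : 1 < W → a ^ (1 - θ) * W ≤ 1 → D ≤ C * (a ^ θ * Real.log (W ^ 2) +
      a ^ θ * |Real.log (a ^ 2)| + a ^ θ))
    (h3 : 1 < W → 1 < a ^ (1 - θ) * W → D ≤ C * (W ^ (θ / (1 - θ)) + Real.log (W ^ 2) +
      (2 / (1 - θ)) * |Real.log W|)) :
    D ≤ C * (7 + 4 / θ + (2 + 2 / (1 - θ)) * ((1 - θ) / θ)) * (1 + W ^ (θ / (1 - θ))) := by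
  have hθ1' : 0 < 1 - θ := by linarith
  have hs : 0 < θ / (1 - θ) := div_pos hθ0 hθ1'
  have hWs : 0 ≤ W ^ (θ / (1 - θ)) := Real.rpow_nonneg hW.le _
  have hM : (6:ℝ) ≤ 7 + 4 / θ + (2 + 2 / (1 - θ)) * ((1 - θ) / θ) := by
    have : 0 < 4 / θ := by positivity
    have : 0 < (2 + 2 / (1 - θ)) * ((1 - θ) / θ) := by positivity
    linarith
  have hM2 : (1:ℝ) + 4 / θ ≤ 7 + 4 / θ + (2 + 2 / (1 - θ)) * ((1 - θ) / θ) := by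
    have : 0 < (2 + 2 / (1 - θ)) * ((1 - θ) / θ) := by positivity
    linarith
  have hlogW2 : Real.log (W ^ 2) = 2 * Real.log W := by
    rw [Real.log_pow]; norm_num
  have hloga2 : |Real.log (a ^ 2)| = 2 * |Real.log a| := by
    rw [Real.log_pow, abs_mul]; norm_num
  rcases le_or_gt W 1 with hW1 | hW1
  · -- region 1
    have e1 : a * W * |Real.log (W ^ 2)| ≤ 2 := by
      have := aux_mul_abs_log_le hW hW1
      rw [hlogW2, abs_mul]
      have h2' : |(2:ℝ)| = 2 := by norm_num
      rw [h2']
      nlinarith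
    have e2 : a * W * |Real.log (a ^ 2)| ≤ 2 := by
      have := aux_mul_abs_log_le ha0 ha1
      rw [hloga2]
      nlinarith
    have e3 : a * (1 + W) ≤ 2 := by nlinarith
    have hX := h1 hW1
    have hsum : a * W * |Real.log (W ^ 2)| + a * W * |Real.log (a ^ 2)| + a * (1 + W) ≤ 6 := by
      linarith
    have hDle : D ≤ C * 6 := hX.trans (mul_le_mul_of_nonneg_left hsum hC.le)
    have hCM : C * 6 ≤ C * (7 + 4 / θ + (2 + 2 / (1 - θ)) * ((1 - θ) / θ)) :=
      mul_le_mul_of_nonneg_left hM hC.le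
    have hfin : C * (7 + 4 / θ + (2 + 2 / (1 - θ)) * ((1 - θ) / θ)) ≤
        C * (7 + 4 / θ + (2 + 2 / (1 - θ)) * ((1 - θ) / θ)) * (1 + W ^ (θ / (1 - θ))) :=
      le_mul_of_one_le_right (by positivity) (by linarith)
    linarith
  · rcases le_or_gt (a ^ (1 - θ) * W) 1 with hr2 | hr3
    · -- region 2
      have haθ : 0 < a ^ θ := Real.rpow_pos_of_pos ha0 θ
      have haθ1 : a ^ θ ≤ 1 := Real.rpow_le_one ha0.le ha1 hθ0.le
      have hal : a ^ θ * |Real.log a| ≤ 1 / θ := aux_rpow_theta_abslog_le ha0 ha1 hθ0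
      have hloga : Real.log a ≤ 0 := Real.log_nonpos ha0.le ha1
      have hap : 0 < a ^ (1 - θ) := Real.rpow_pos_of_pos ha0 _
      have hWle : W ≤ (a ^ (1 - θ))⁻¹ := by
        rw [← one_div, le_div_iff₀ hap, mul_comm]
        exact hr2
      have hlogWle : Real.log W ≤ (1 - θ) * |Real.log a| := by
        calc Real.log W ≤ Real.log ((a ^ (1 - θ))⁻¹) :=
              Real.log_le_log hW hWle
          _ = -((1 - θ) * Real.log a) := by rw [Real.log_inv, Real.log_rpow ha0]
          _ = (1 - θ) * (-Real.log a) := by ring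
          _ = (1 - θ) * |Real.log a| := by rw [abs_of_nonpos hloga]
      have hlogWnn : 0 ≤ Real.log W := Real.log_nonneg hW1.le
      have e1 : a ^ θ * Real.log (W ^ 2) ≤ 4 / θ - 2 / θ := by
        rw [hlogW2]
        have : a ^ θ * Real.log W ≤ a ^ θ * ((1 - θ) * |Real.log a|) :=
          mul_le_mul_of_nonneg_left hlogWle haθ.le
        have h2' : a ^ θ * ((1 - θ) * |Real.log a|) ≤ a ^ θ * |Real.log a| := by
          nlinarith [mul_nonneg (mul_nonneg haθ.le (abs_nonneg (Real.log a))) hθ0.le]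
        have hd : (4:ℝ) / θ - 2 / θ = 2 * (1 / θ) := by ring
        rw [hd]; linarith
      have e2 : a ^ θ * |Real.log (a ^ 2)| ≤ 2 / θ := by
        rw [hloga2]
        have hd : (2:ℝ) / θ = 2 * (1 / θ) := by ring
        rw [hd]; linarith
      have hX := h2 hW1 hr2
      have hsum : a ^ θ * Real.log (W ^ 2) + a ^ θ * |Real.log (a ^ 2)| + a ^ θ ≤ 1 + 4 / θ := by
        linarith
      have hDle : D ≤ C * (1 + 4 / θ) :=
        hX.trans (mul_le_mul_of_nonneg_left hsum hC.le)
      have hCM : C * (1 + 4 / θ) ≤ C * (7 + 4 / θ + (2 + 2 / (1 - θ)) * ((1 - θ) / θ)) :=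
        mul_le_mul_of_nonneg_left hM2 hC.le
      have hfin : C * (7 + 4 / θ + (2 + 2 / (1 - θ)) * ((1 - θ) / θ)) ≤
          C * (7 + 4 / θ + (2 + 2 / (1 - θ)) * ((1 - θ) / θ)) * (1 + W ^ (θ / (1 - θ))) :=
        le_mul_of_one_le_right (by positivity) (by linarith)
      linarith
    · -- region 3
      have hlogWnn : 0 ≤ Real.log W := Real.log_nonneg hW1.le
      have habs : |Real.log W| = Real.log W := abs_of_nonneg hlogWnn
      have hlr : Real.log W ≤ W ^ (θ / (1 - θ)) * ((1 - θ) / θ) := by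
        have := aux_log_le_rpow hW1.le hs
        calc Real.log W ≤ W ^ (θ / (1 - θ)) / (θ / (1 - θ)) := this
          _ = W ^ (θ / (1 - θ)) * ((1 - θ) / θ) := by
            rw [div_eq_mul_inv, inv_div]
      have hX := h3 hW1 hr3
      rw [hlogW2, habs] at hX
      have hkey : W ^ (θ / (1 - θ)) + 2 * Real.log W + 2 / (1 - θ) * Real.log W ≤
          (7 + 4 / θ + (2 + 2 / (1 - θ)) * ((1 - θ) / θ)) * (1 + W ^ (θ / (1 - θ))) := by
        have h21 : 0 < 2 / (1 - θ) := by positivity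
        have h4θ : 0 < 4 / θ := by positivity
        nlinarith [mul_le_mul_of_nonneg_left hlr (by positivity : (0:ℝ) ≤ 2 + 2 / (1 - θ))]
      calc D ≤ C * (W ^ (θ / (1 - θ)) + 2 * Real.log W + 2 / (1 - θ) * Real.log W) := hX
        _ ≤ C * ((7 + 4 / θ + (2 + 2 / (1 - θ)) * ((1 - θ) / θ)) * (1 + W ^ (θ / (1 - θ)))) :=
            mul_le_mul_of_nonneg_left hkey hC.le
        _ = C * (7 + 4 / θ + (2 + 2 / (1 - θ)) * ((1 - θ) / θ)) * (1 + W ^ (θ / (1 - θ))) := by ring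

open Filter Set in
lemma aux_tendsto_rpow_abslog {r : ℝ} (hr : 0 < r) :
    Filter.Tendsto (fun a : ℝ => a ^ r * |Real.log a|) (nhdsWithin 0 (Set.Ioi 0)) (nhds 0) := by
  have h := (tendsto_log_mul_rpow_nhdsGT_zero hr).neg
  rw [neg_zero] at h
  apply h.congr'
  filter_upwards [Ioo_mem_nhdsGT_of_mem (by constructor <;> norm_num : (0:ℝ) ∈ Set.Ico 0 1)]
    with a ha
  rw [abs_of_nonpos (Real.log_nonpos ha.1.le ha.2.le)]
  ring

open Filter Set in
lemma aux_tendsto_rpow {r : ℝ} (hr : 0 < r) :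
    Filter.Tendsto (fun a : ℝ => a ^ r) (nhdsWithin 0 (Set.Ioi 0)) (nhds 0) := by
  have h : Filter.Tendsto (fun a : ℝ => a ^ r) (nhds 0) (nhds ((0:ℝ) ^ r)) :=
    (Real.continuousAt_rpow_const 0 r (Or.inr hr.le)).tendsto
  rw [Real.zero_rpow hr.ne'] at h
  exact h.mono_left nhdsWithin_le_nhds

open Filter Set in
lemma aux_tendsto_id' : Filter.Tendsto (fun a : ℝ => a) (nhdsWithin 0 (Set.Ioi 0)) (nhds 0) :=
  tendsto_id.mono_left nhdsWithin_le_nhds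

open Filter Set in
lemma aux_tendsto_zero {C θ W : ℝ} (hC : 0 < C) (hθ0 : 0 < θ) (hθ1 : θ < 1) (hW : 0 < W)
    (D : ℝ → ℝ) (hDnn : ∀ a, 0 ≤ D a)
    (h1 : W ≤ 1 → ∀ a : ℝ, 0 < a → D a ≤ C * (a * W * |Real.log (W ^ 2)| +
      a * W * |Real.log (a ^ 2)| + a * (1 + W)))
    (h2 : 1 < W → ∀ a : ℝ, 0 < a → a ^ (1 - θ) * W ≤ 1 → D a ≤
      C * (a ^ θ * Real.log (W ^ 2) + a ^ θ * |Real.log (a ^ 2)| + a ^ θ)) :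
    Filter.Tendsto D (nhdsWithin 0 (Set.Ioi 0)) (nhds 0) := by
  have hloga2 : ∀ a : ℝ, |Real.log (a ^ 2)| = 2 * |Real.log a| := fun a => by
    rw [Real.log_pow, abs_mul]; norm_num
  rcases le_or_gt W 1 with hW1 | hW1
  · apply squeeze_zero' (Eventually.of_forall hDnn)
      (g := fun a => C * (a * W * |Real.log (W ^ 2)| + 2 * W * (a * |Real.log a|) + a * (1 + W)))
    · filter_upwards [self_mem_nhdsWithin] with a (ha : a ∈ Set.Ioi 0)
      have := h1 hW1 a ha
      rw [hloga2 a] at this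
      calc D a ≤ _ := this
        _ = C * (a * W * |Real.log (W ^ 2)| + 2 * W * (a * |Real.log a|) + a * (1 + W)) := by
          ring
    · have hT : Tendsto (fun a : ℝ => C * (a * W * |Real.log (W ^ 2)| +
          2 * W * (a * |Real.log a|) + a * (1 + W))) (nhdsWithin 0 (Set.Ioi 0))
          (nhds (C * (0 * W * |Real.log (W ^ 2)| + 2 * W * 0 + 0 * (1 + W)))) := by
        have t1 : Tendsto (fun a : ℝ => a * |Real.log a|) (nhdsWithin 0 (Set.Ioi 0)) (nhds 0) := by
          have := aux_tendsto_rpow_abslog (r := 1) one_pos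
          simpa [Real.rpow_one] using this
        exact ((((aux_tendsto_id'.mul_const W).mul_const _).add
          (tendsto_const_nhds.mul t1)).add (aux_tendsto_id'.mul_const (1 + W))).const_mul C
      simpa using hT
  · -- W > 1
    have hδ : (0:ℝ) < (W⁻¹) ^ (1 / (1 - θ)) := Real.rpow_pos_of_pos (by positivity) _
    apply squeeze_zero' (Eventually.of_forall hDnn)
      (g := fun a => C * (a ^ θ * Real.log (W ^ 2) + 2 * (a ^ θ * |Real.log a|) + a ^ θ))
    · filter_upwards [Ioo_mem_nhdsGT_of_mem
        (⟨le_refl 0, hδ⟩ : (0:ℝ) ∈ Set.Ico 0 ((W⁻¹) ^ (1 / (1 - θ))))]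
        with a ha
      have hbound : a ^ (1 - θ) * W ≤ 1 := by
        have h1θ : (0:ℝ) < 1 - θ := by linarith
        have hle : a ^ (1 - θ) ≤ ((W⁻¹) ^ (1 / (1 - θ))) ^ (1 - θ) :=
          Real.rpow_le_rpow ha.1.le ha.2.le h1θ.le
        have heq : ((W⁻¹) ^ (1 / (1 - θ))) ^ (1 - θ) = W⁻¹ := by
          rw [← Real.rpow_mul (by positivity), one_div_mul_cancel h1θ.ne', Real.rpow_one]
        rw [heq] at hle
        calc a ^ (1 - θ) * W ≤ W⁻¹ * W := mul_le_mul_of_nonneg_right hle hW.le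
          _ = 1 := inv_mul_cancel₀ hW.ne'
      have := h2 hW1 a ha.1 hbound
      rw [hloga2 a] at this
      calc D a ≤ _ := this
        _ = C * (a ^ θ * Real.log (W ^ 2) + 2 * (a ^ θ * |Real.log a|) + a ^ θ) := by ring
    · have hT : Tendsto (fun a : ℝ => C * (a ^ θ * Real.log (W ^ 2) +
          2 * (a ^ θ * |Real.log a|) + a ^ θ)) (nhdsWithin 0 (Set.Ioi 0))
          (nhds (C * (0 * Real.log (W ^ 2) + 2 * 0 + 0))) :=
        ((((aux_tendsto_rpow hθ0).mul_const _).add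
          ((aux_tendsto_rpow_abslog hθ0).const_mul 2)).add (aux_tendsto_rpow hθ0)).const_mul C
      simpa using hT

lemma aux_dom {Cm q s ε X Y W D V : ℝ} (hCm : 0 ≤ Cm) (hq : 0 ≤ q) (hs : 0 < s)
    (hε : 0 < ε) (hX : 1 ≤ X) (hY : 1 ≤ Y) (hW : 0 ≤ W) (hWle : W ≤ X * Y)
    (hD : 0 ≤ D) (hDle : D ≤ Cm * (1 + W ^ s)) (hV : 0 ≤ V)
    (hVle : V ≤ q * Y ^ (-(4 + ε))) :
    D ^ 2 * V ^ 2 * Y ^ (6 + ε) * X ^ (-(6 + ε)) ≤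
      (2 * Cm) ^ 2 * q ^ 2 * (X ^ (2 * s - (6 + ε)) * Y ^ (2 * s - (2 + ε))) := by
  have hX0 : (0:ℝ) < X := by linarith
  have hY0 : (0:ℝ) < Y := by linarith
  have hXs1 : (1:ℝ) ≤ X ^ s := by
    calc (1:ℝ) = 1 ^ s := (Real.one_rpow s).symm
      _ ≤ X ^ s := Real.rpow_le_rpow zero_le_one hX hs.le
  have hYs1 : (1:ℝ) ≤ Y ^ s := by
    calc (1:ℝ) = 1 ^ s := (Real.one_rpow s).symm
      _ ≤ Y ^ s := Real.rpow_le_rpow zero_le_one hY hs.le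
  have hWs : W ^ s ≤ X ^ s * Y ^ s := by
    calc W ^ s ≤ (X * Y) ^ s := Real.rpow_le_rpow hW hWle hs.le
      _ = X ^ s * Y ^ s := Real.mul_rpow hX0.le hY0.le
  have hsum : 1 + W ^ s ≤ 2 * (X ^ s * Y ^ s) := by nlinarith
  have hD2 : D ≤ Cm * (2 * (X ^ s * Y ^ s)) :=
    hDle.trans (mul_le_mul_of_nonneg_left hsum hCm)
  have h1 : D ^ 2 ≤ (Cm * (2 * (X ^ s * Y ^ s))) ^ 2 := pow_le_pow_left₀ hD hD2 2
  have h2 : V ^ 2 ≤ (q * Y ^ (-(4 + ε))) ^ 2 := pow_le_pow_left₀ hV hVle 2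
  have hAnn : (0:ℝ) ≤ Y ^ (6 + ε) := Real.rpow_nonneg hY0.le _
  have hBnn : (0:ℝ) ≤ X ^ (-(6 + ε)) := Real.rpow_nonneg hX0.le _
  have step : D ^ 2 * V ^ 2 * Y ^ (6 + ε) * X ^ (-(6 + ε)) ≤
      (Cm * (2 * (X ^ s * Y ^ s))) ^ 2 * (q * Y ^ (-(4 + ε))) ^ 2 * Y ^ (6 + ε) *
        X ^ (-(6 + ε)) := by
    apply mul_le_mul_of_nonneg_right _ hBnn
    apply mul_le_mul_of_nonneg_right _ hAnn
    exact mul_le_mul h1 h2 (by positivity) (by positivity)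
  refine step.trans (le_of_eq ?_)
  have hXm : X ^ (2 * s - (6 + ε)) = X ^ s * X ^ s * X ^ (-(6 + ε)) := by
    rw [show 2 * s - (6 + ε) = s + s + -(6 + ε) by ring, Real.rpow_add hX0,
      Real.rpow_add hX0]
  have hYm : Y ^ (2 * s - (2 + ε)) =
      Y ^ s * Y ^ s * Y ^ (-(4 + ε)) * Y ^ (-(4 + ε)) * Y ^ (6 + ε) := by
    rw [show 2 * s - (2 + ε) = s + s + -(4 + ε) + -(4 + ε) + (6 + ε) by ring,
      Real.rpow_add hY0, Real.rpow_add hY0, Real.rpow_add hY0, Real.rpow_add hY0]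
  rw [hXm, hYm]
  ring

open Filter Set in
lemma aux_tendsto_zero_filter {ι : Type*} {Fl : Filter ι} {A : ι → ℝ}
    (hA : Filter.Tendsto A Fl (nhdsWithin 0 (Set.Ioi 0)))
    {C θ W : ℝ} (hθ0 : 0 < θ) (hθ1 : θ < 1) (hW : 0 < W)
    (D : ι → ℝ) (hDnn : ∀ i, 0 ≤ D i)
    (h1 : W ≤ 1 → ∀ i : ι, 0 < A i → D i ≤ C * (A i * W * |Real.log (W ^ 2)| +
      A i * W * |Real.log (A i ^ 2)| + A i * (1 + W)))
    (h2 : 1 < W → ∀ i : ι, 0 < A i → A i ^ (1 - θ) * W ≤ 1 → D i ≤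
      C * (A i ^ θ * Real.log (W ^ 2) + A i ^ θ * |Real.log (A i ^ 2)| + A i ^ θ)) :
    Filter.Tendsto D Fl (nhds 0) := by
  have hloga2 : ∀ a : ℝ, |Real.log (a ^ 2)| = 2 * |Real.log a| := fun a => by
    rw [Real.log_pow, abs_mul]; norm_num
  have hposA : ∀ᶠ i in Fl, 0 < A i := hA self_mem_nhdsWithin
  rcases le_or_gt W 1 with hW1 | hW1
  · apply squeeze_zero' (Eventually.of_forall hDnn)
      (g := fun i => C * (A i * W * |Real.log (W ^ 2)| + 2 * W * (A i * |Real.log (A i)|) +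
        A i * (1 + W)))
    · filter_upwards [hposA] with i hi
      have := h1 hW1 i hi
      rw [hloga2 (A i)] at this
      calc D i ≤ _ := this
        _ = _ := by ring
    · have t1 : Tendsto (fun i => A i * |Real.log (A i)|) Fl (nhds 0) := by
        have := aux_tendsto_rpow_abslog (r := 1) one_pos
        simp only [Real.rpow_one] at this
        exact this.comp hA
      have tA : Tendsto A Fl (nhds 0) := hA.mono_right nhdsWithin_le_nhds
      have hT : Tendsto (fun i => C * (A i * W * |Real.log (W ^ 2)| +
          2 * W * (A i * |Real.log (A i)|) + A i * (1 + W))) Fl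
          (nhds (C * (0 * W * |Real.log (W ^ 2)| + 2 * W * 0 + 0 * (1 + W)))) :=
        ((((tA.mul_const W).mul_const _).add (t1.const_mul (2 * W))).add
          (tA.mul_const (1 + W))).const_mul C
      simpa using hT
  · have hδ : (0:ℝ) < (W⁻¹) ^ (1 / (1 - θ)) := Real.rpow_pos_of_pos (by positivity) _
    have hsmall : ∀ᶠ i in Fl, A i ∈ Set.Ioo 0 ((W⁻¹) ^ (1 / (1 - θ))) :=
      hA (Ioo_mem_nhdsGT_of_mem ⟨le_refl 0, hδ⟩)
    apply squeeze_zero' (Eventually.of_forall hDnn)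
      (g := fun i => C * (A i ^ θ * Real.log (W ^ 2) + 2 * (A i ^ θ * |Real.log (A i)|) +
        A i ^ θ))
    · filter_upwards [hsmall] with i hi
      have hbound : A i ^ (1 - θ) * W ≤ 1 := by
        have h1θ : (0:ℝ) < 1 - θ := by linarith
        have hle : A i ^ (1 - θ) ≤ ((W⁻¹) ^ (1 / (1 - θ))) ^ (1 - θ) :=
          Real.rpow_le_rpow hi.1.le hi.2.le h1θ.le
        have heq : ((W⁻¹) ^ (1 / (1 - θ))) ^ (1 - θ) = W⁻¹ := by
          rw [← Real.rpow_mul (by positivity), one_div_mul_cancel h1θ.ne', Real.rpow_one]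
        rw [heq] at hle
        calc A i ^ (1 - θ) * W ≤ W⁻¹ * W := mul_le_mul_of_nonneg_right hle hW.le
          _ = 1 := inv_mul_cancel₀ hW.ne'
      have := h2 hW1 i hi.1 hbound
      rw [hloga2 (A i)] at this
      calc D i ≤ _ := this
        _ = _ := by ring
    · have tθ : Tendsto (fun i => A i ^ θ) Fl (nhds 0) := (aux_tendsto_rpow hθ0).comp hA
      have tθl : Tendsto (fun i => A i ^ θ * |Real.log (A i)|) Fl (nhds 0) :=
        (aux_tendsto_rpow_abslog hθ0).comp hA
      have hT : Tendsto (fun i => C * (A i ^ θ * Real.log (W ^ 2) +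
          2 * (A i ^ θ * |Real.log (A i)|) + A i ^ θ)) Fl
          (nhds (C * (0 * Real.log (W ^ 2) + 2 * 0 + 0))) :=
        (((tθ.mul_const _).add (tθl.const_mul 2)).add tθ).const_mul C
      simpa using hT

lemma aux_ae_sub_ne :
    ∀ᵐ p ∂((volume : Measure ℂ).prod (volume : Measure ℂ)), p.1 - p.2 ≠ 0 := by
  rw [MeasureTheory.ae_iff]
  have hs : MeasurableSet {p : ℂ × ℂ | p.1 - p.2 = 0} :=
    (measurable_fst.sub measurable_snd) (measurableSet_singleton 0)
  have : {p : ℂ × ℂ | ¬p.1 - p.2 ≠ 0} = {p : ℂ × ℂ | p.1 - p.2 = 0} := by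
    ext p; simp
  rw [this, Measure.prod_apply hs]
  have : ∀ x : ℂ, (Prod.mk x ⁻¹' {p : ℂ × ℂ | p.1 - p.2 = 0}) = {x} := by
    intro x; ext y
    simp [sub_eq_zero, eq_comm]
  simp [this]

/-- Auxiliary kernel. -/
noncomputable def auxFker (g : ℂ → ℂ → ℂ) (v : ℂ → ℂ) (ε : ℝ) (l : ℂ) (p : ℂ × ℂ) : ℝ :=
  ‖g l (p.1 - p.2) - logKer (p.1 - p.2)‖ ^ 2 * ‖v p.2‖ ^ 2 *
    (1 + ‖p.2‖) ^ (6 + ε) * (1 + ‖p.1‖) ^ (-(6 + ε))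

lemma auxFker_nonneg (g : ℂ → ℂ → ℂ) (v : ℂ → ℂ) (ε : ℝ) (l : ℂ) (p : ℂ × ℂ) :
    0 ≤ auxFker g v ε l p := by
  unfold auxFker
  positivity

lemma auxFker_measurable (g : ℂ → ℂ → ℂ) (v : ℂ → ℂ) (ε : ℝ) (l : ℂ)
    (hgm : Measurable (g l)) (hv : Measurable v) : Measurable (auxFker g v ε l) := by
  unfold auxFker
  have habs : Measurable (fun z : ℂ => ‖z‖) := continuous_norm.measurable
  have hsub : Measurable fun p : ℂ × ℂ => p.1 - p.2 := measurable_fst.sub measurable_snd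
  have hgl : Measurable fun p : ℂ × ℂ => g l (p.1 - p.2) := hgm.comp hsub
  have hlog : Measurable logKer := by
    unfold logKer
    exact Complex.measurable_ofReal.comp (((habs.pow_const 2).log).const_mul (1 / (16 * Real.pi)))
  have h1 : Measurable fun p : ℂ × ℂ =>
      ‖g l (p.1 - p.2) - logKer (p.1 - p.2)‖ ^ 2 :=
    (habs.comp (hgl.sub (hlog.comp hsub))).pow_const 2
  have h2 : Measurable fun p : ℂ × ℂ => ‖v p.2‖ ^ 2 :=
    (habs.comp (hv.comp measurable_snd)).pow_const 2
  have h3 : Measurable fun p : ℂ × ℂ => (1 + ‖p.2‖) ^ (6 + ε) :=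
    ((continuous_const.add (continuous_norm.comp continuous_snd)).rpow_const
      (fun p => Or.inl
        (by linarith [norm_nonneg p.2] : (0:ℝ) < 1 + ‖p.2‖).ne')).measurable
  have h4 : Measurable fun p : ℂ × ℂ => (1 + ‖p.1‖) ^ (-(6 + ε)) :=
    ((continuous_const.add (continuous_norm.comp continuous_fst)).rpow_const
      (fun p => Or.inl
        (by linarith [norm_nonneg p.1] : (0:ℝ) < 1 + ‖p.1‖).ne')).measurable
  exact ((h1.mul h2).mul h3).mul h4

open Filter Set

/-- Continuity of the Hilbert–Schmidt family H^r(λ) at λ = 0: given the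
three-region pointwise bounds on g^r(w,λ) - (1/(16π))ln|w|² (with 2θ/(1-θ) < ε)
and the decay of v, the squared Hilbert–Schmidt norm of the kernel difference
tends to 0 as |λ| → 0. -/
theorem stmt18 (g : ℂ → ℂ → ℂ) (v : ℂ → ℂ) (q ε C θ : ℝ)
    (hq : 0 < q) (hε : 0 < ε) (hC : 0 < C) (hθ0 : 0 < θ) (hθ1 : θ < 1)
    (hθε : 2 * θ / (1 - θ) < ε)
    (hgm : ∀ l : ℂ, Measurable (g l)) (hv : Measurable v)
    (hvb : ∀ z : ℂ, ‖v z‖ ≤ q * (1 + ‖z‖) ^ (-(4 + ε)))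
    (hb1 : ∀ l : ℂ, l ≠ 0 → ∀ w : ℂ, w ≠ 0 → ‖w‖ ≤ 1 →
      ‖g l w - logKer w‖ ≤
        C * (‖l‖ * ‖w‖ * |Real.log (‖w‖ ^ 2)| +
          ‖l‖ * ‖w‖ * |Real.log (‖l‖ ^ 2)| +
          ‖l‖ * (1 + ‖w‖)))
    (hb2 : ∀ l : ℂ, l ≠ 0 → ∀ w : ℂ, 1 < ‖w‖ →
      ‖l‖ ^ (1 - θ) * ‖w‖ ≤ 1 →
      ‖g l w - logKer w‖ ≤
        C * (‖l‖ ^ θ * Real.log (‖w‖ ^ 2) +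
          ‖l‖ ^ θ * |Real.log (‖l‖ ^ 2)| + ‖l‖ ^ θ))
    (hb3 : ∀ l : ℂ, l ≠ 0 → ∀ w : ℂ, 1 < ‖w‖ →
      1 < ‖l‖ ^ (1 - θ) * ‖w‖ →
      ‖g l w - logKer w‖ ≤
        C * (‖w‖ ^ (θ / (1 - θ)) + Real.log (‖w‖ ^ 2) +
          (2 / (1 - θ)) * |Real.log (‖w‖)|)) :
    Filter.Tendsto
      (fun l : ℂ => ∫ z : ℂ, ∫ ξ : ℂ,
        ‖g l (z - ξ) - logKer (z - ξ)‖ ^ 2 * ‖v ξ‖ ^ 2 *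
          (1 + ‖ξ‖) ^ (6 + ε) * (1 + ‖z‖) ^ (-(6 + ε)))
      (nhdsWithin 0 {(0 : ℂ)}ᶜ) (nhds 0) := by
  have hθ1' : (0:ℝ) < 1 - θ := by linarith
  have hss : 0 < θ / (1 - θ) := div_pos hθ0 hθ1'
  have h2s : 2 * (θ / (1 - θ)) < ε := by rwa [mul_div_assoc] at hθε
  set M : ℝ := 7 + 4 / θ + (2 + 2 / (1 - θ)) * ((1 - θ) / θ) with hM
  have hMpos : 0 < M := by
    have h1 : 0 < 4 / θ := by positivity
    have h2 : 0 < (2 + 2 / (1 - θ)) * ((1 - θ) / θ) := by positivity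
    rw [hM]; linarith
  set μ : Measure (ℂ × ℂ) := (volume : Measure ℂ).prod volume with hμ
  -- integrable bound
  have hi1 : Integrable (fun z : ℂ => (1 + ‖z‖) ^ (2 * (θ / (1 - θ)) - (6 + ε))) := by
    have hexp : 2 * (θ / (1 - θ)) - (6 + ε) = -((6 + ε) - 2 * (θ / (1 - θ))) := by ring
    rw [hexp]
    exact aux_integrable_pow (by linarith)
  have hi2 : Integrable (fun z : ℂ => (1 + ‖z‖) ^ (2 * (θ / (1 - θ)) - (2 + ε))) := by
    have hexp : 2 * (θ / (1 - θ)) - (2 + ε) = -((2 + ε) - 2 * (θ / (1 - θ))) := by ring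
    rw [hexp]
    exact aux_integrable_pow (by linarith)
  have hbint : Integrable (fun p : ℂ × ℂ => (2 * (C * M)) ^ 2 * q ^ 2 *
      ((1 + ‖p.1‖) ^ (2 * (θ / (1 - θ)) - (6 + ε)) *
        (1 + ‖p.2‖) ^ (2 * (θ / (1 - θ)) - (2 + ε)))) μ :=
    (hi1.mul_prod hi2).const_mul _
  -- a.e. pointwise domination for each fixed small l
  have hdom : ∀ l : ℂ, l ≠ 0 → ‖l‖ ≤ 1 → ∀ᵐ p ∂μ,
      ‖auxFker g v ε l p‖ ≤ (2 * (C * M)) ^ 2 * q ^ 2 *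
        ((1 + ‖p.1‖) ^ (2 * (θ / (1 - θ)) - (6 + ε)) *
          (1 + ‖p.2‖) ^ (2 * (θ / (1 - θ)) - (2 + ε))) := by
    intro l hl hl1
    rw [hμ]
    filter_upwards [aux_ae_sub_ne] with p hp
    have hW0 : 0 < ‖p.1 - p.2‖ := norm_pos_iff.mpr hp
    have ha0 : 0 < ‖l‖ := norm_pos_iff.mpr hl
    have hD := aux_region_bound hC hθ0 hθ1 ha0 hl1 hW0 (norm_nonneg _)
      (fun h => hb1 l hl _ hp h) (fun h h' => hb2 l hl _ h h') (fun h h' => hb3 l hl _ h h')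
    rw [← hM] at hD
    rw [Real.norm_eq_abs, abs_of_nonneg (auxFker_nonneg g v ε l p)]
    unfold auxFker
    have hWle : ‖p.1 - p.2‖ ≤ (1 + ‖p.1‖) * (1 + ‖p.2‖) := by
      have htri : ‖p.1 - p.2‖ ≤ ‖p.1‖ + ‖p.2‖ := by
        simpa using norm_sub_le p.1 p.2
      nlinarith [norm_nonneg p.1, norm_nonneg p.2]
    exact aux_dom (by positivity) hq.le hss hε
      (by linarith [norm_nonneg p.1]) (by linarith [norm_nonneg p.2])
      (norm_nonneg _) hWle (norm_nonneg _) hD (norm_nonneg _) (hvb p.2)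
  -- a.e. pointwise convergence to 0
  have hA : Tendsto (fun l : ℂ => ‖l‖) (nhdsWithin 0 {(0:ℂ)}ᶜ)
      (nhdsWithin 0 (Set.Ioi 0)) := by
    rw [tendsto_nhdsWithin_iff]
    constructor
    · have := (continuous_norm.tendsto 0).mono_left
        (nhdsWithin_le_nhds (s := {(0:ℂ)}ᶜ))
      simpa using this
    · filter_upwards [self_mem_nhdsWithin] with l hl
      exact norm_pos_iff.mpr (Set.mem_compl_singleton_iff.mp hl)
  have hlim : ∀ᵐ p ∂μ, Tendsto (fun l : ℂ => auxFker g v ε l p)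
      (nhdsWithin 0 {(0:ℂ)}ᶜ) (nhds 0) := by
    rw [hμ]
    filter_upwards [aux_ae_sub_ne] with p hp
    have hW0 : 0 < ‖p.1 - p.2‖ := norm_pos_iff.mpr hp
    have hne : ∀ l : ℂ, 0 < ‖l‖ → l ≠ 0 := fun l h => by
      intro h0; rw [h0] at h; simp at h
    have hDt : Tendsto (fun l : ℂ => ‖g l (p.1 - p.2) - logKer (p.1 - p.2)‖)
        (nhdsWithin 0 {(0:ℂ)}ᶜ) (nhds 0) :=
      aux_tendsto_zero_filter hA hθ0 hθ1 hW0 _ (fun l => norm_nonneg _)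
        (fun h l hl => hb1 l (hne l hl) _ hp h)
        (fun h l hl hle => hb2 l (hne l hl) _ h hle)
    have hT := (((hDt.pow 2).mul_const (‖v p.2‖ ^ 2)).mul_const
      ((1 + ‖p.2‖) ^ (6 + ε))).mul_const ((1 + ‖p.1‖) ^ (-(6 + ε)))
    unfold auxFker
    simpa using hT
  -- dominated convergence on the product space
  have hmeas : ∀ᶠ l in nhdsWithin (0:ℂ) {(0:ℂ)}ᶜ, AEStronglyMeasurable (auxFker g v ε l) μ :=
    Eventually.of_forall fun l => (auxFker_measurable g v ε l (hgm l) hv).aestronglyMeasurable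
  have hsmall : ∀ᶠ l : ℂ in nhdsWithin 0 {(0:ℂ)}ᶜ, ‖l‖ ≤ 1 ∧ l ≠ 0 := by
    have h1 : ∀ᶠ l : ℂ in nhdsWithin 0 {(0:ℂ)}ᶜ, ‖l‖ ≤ 1 := by
      apply Filter.Eventually.filter_mono nhdsWithin_le_nhds
      have := Metric.closedBall_mem_nhds (0:ℂ) one_pos
      filter_upwards [this] with l hl
      simpa [Complex.dist_eq] using hl
    filter_upwards [h1, self_mem_nhdsWithin] with l h1 h2
    exact ⟨h1, Set.mem_compl_singleton_iff.mp h2⟩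
  have hbound : ∀ᶠ l : ℂ in nhdsWithin 0 {(0:ℂ)}ᶜ, ∀ᵐ p ∂μ,
      ‖auxFker g v ε l p‖ ≤ (2 * (C * M)) ^ 2 * q ^ 2 *
        ((1 + ‖p.1‖) ^ (2 * (θ / (1 - θ)) - (6 + ε)) *
          (1 + ‖p.2‖) ^ (2 * (θ / (1 - θ)) - (2 + ε))) := by
    filter_upwards [hsmall] with l hl
    exact hdom l hl.2 hl.1
  have key : Tendsto (fun l : ℂ => ∫ p, auxFker g v ε l p ∂μ)
      (nhdsWithin 0 {(0:ℂ)}ᶜ) (nhds (∫ _ : ℂ × ℂ, (0:ℝ) ∂μ)) :=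
    tendsto_integral_filter_of_dominated_convergence _ hmeas hbound hbint hlim
  rw [integral_zero] at key
  -- convert the product integral into the iterated integral
  apply key.congr'
  filter_upwards [hsmall] with l hl
  have hInt : Integrable (auxFker g v ε l) μ :=
    hbint.mono' (auxFker_measurable g v ε l (hgm l) hv).aestronglyMeasurable
      (hdom l hl.2 hl.1)
  rw [hμ] at hInt ⊢
  exact MeasureTheory.integral_prod _ hInt
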